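/- Let A := ∫_{θ*}^1 𝒢(ψ(θ)) f(θ) dθ and B := max_{p∈[0,1]} (1−F(p))·(p−μ). Then 0 < B < A, and setting δ* := B/A ∈ (0,1), one has δ·A > B for every δ ∈ (δ*,1) and δ·A < B for every δ ∈ (0,δ*) (a discount-factor threshold at which the ex-post optimal mechanism overtakes the ex-ante fixed-price mechanism). -/

import Mathlib

open MeasureTheory Set Function

/-- `F(x) = ∫₀^x f`, with the convention that it is `0` for `x ≤ 0`. -/
noncomputable def cdf (f : ℝ → ℝ) (x : ℝ) : ℝ := ∫ t in Set.Ioc (0:ℝ) x, f t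

/-- `𝒢(x) = ∫₀^x G(y) dy`, the left-hand integral of the cdf of `g` (`= 0` for `x ≤ 0`). -/
noncomputable def calG (g : ℝ → ℝ) (x : ℝ) : ℝ := ∫ y in Set.Ioc (0:ℝ) x, cdf g y

/-- `μ = ∫₀¹ ω g(ω) dω`, the mean cost. -/
noncomputable def muG (g : ℝ → ℝ) : ℝ := ∫ t in Set.Ioc (0:ℝ) 1, t * g t

/-- The virtual valuation `ψ(θ) = θ − (1 − F(θ))/f(θ)`. -/
noncomputable def psi (f : ℝ → ℝ) (θ : ℝ) : ℝ := θ - (1 - cdf f θ) / f θ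

lemma pos_setIntegral {h : ℝ → ℝ} {s : Set ℝ} (hs : MeasurableSet s)
    (hint : IntegrableOn h s) (hvol : 0 < volume s)
    (hpos : ∀ᵐ t, t ∈ s → 0 < h t) : 0 < ∫ t in s, h t := by
  have hnn : 0 ≤ᵐ[volume.restrict s] h := by
    filter_upwards [ae_restrict_of_ae hpos, ae_restrict_mem hs] with t ht hts
    exact (ht hts).le
  rw [setIntegral_pos_iff_support_of_nonneg_ae hnn hint]
  have hnull : volume (s \ Function.support h) = 0 := by
    have hsub : ∀ᵐ t, ¬ (t ∈ s ∧ t ∉ Function.support h) := by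
      filter_upwards [hpos] with t ht
      rintro ⟨hts, hns⟩
      exact hns (ht hts).ne'
    have h0 : volume {t | t ∈ s ∧ h t = 0} = 0 := by simpa [ae_iff] using hsub
    refine measure_mono_null (fun t ht => ?_) h0
    exact ⟨ht.1, by simpa [Function.mem_support] using ht.2⟩
  have : volume s ≤ volume (Function.support h ∩ s) + volume (s \ Function.support h) := by
    refine le_trans (measure_mono ?_) (measure_union_le _ _)
    intro t ht
    by_cases hts : t ∈ Function.support h
    · exact Or.inl ⟨hts, ht⟩
    · exact Or.inr ⟨ht, hts⟩
  rw [hnull, add_zero] at this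
  exact lt_of_lt_of_le hvol this

lemma cdf_intervalIntegral (h : ℝ → ℝ) {x : ℝ} (hx : 0 ≤ x) :
    cdf h x = ∫ t in (0:ℝ)..x, h t := (intervalIntegral.integral_of_le hx).symm

lemma cdf_continuousOn {h : ℝ → ℝ} (hh : IntegrableOn h (Icc 0 1)) :
    ContinuousOn (cdf h) (Icc 0 1) :=
  intervalIntegral.continuousOn_primitive hh

lemma cdf_split {h : ℝ → ℝ} (hh : IntegrableOn h (Icc 0 1)) {p : ℝ}
    (hp0 : 0 ≤ p) (hp1 : p ≤ 1) :
    cdf h 1 = cdf h p + ∫ t in Ioc p 1, h t := by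
  unfold cdf
  rw [← setIntegral_union (Set.Ioc_disjoint_Ioc_of_le le_rfl) measurableSet_Ioc
    (hh.mono_set (Ioc_subset_Icc_self.trans (Icc_subset_Icc le_rfl hp1)))
    (hh.mono_set ((Ioc_subset_Icc_self).trans (Icc_subset_Icc hp0 le_rfl))),
    Ioc_union_Ioc_eq_Ioc hp0 hp1]

-- nonneg integral for a.e.-positive functions on subsets of [0,1]
lemma setInt_nonneg {h : ℝ → ℝ} (hae : ∀ᵐ t, t ∈ Icc (0:ℝ) 1 → 0 < h t)
    {s : Set ℝ} (hs : MeasurableSet s) (hsub : s ⊆ Icc 0 1) :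
    0 ≤ ∫ t in s, h t := by
  refine setIntegral_nonneg_ae hs ?_
  filter_upwards [hae] with t ht hts
  exact (ht (hsub hts)).le

lemma setInt_pos {h : ℝ → ℝ} (hae : ∀ᵐ t, t ∈ Icc (0:ℝ) 1 → 0 < h t)
    (hh : IntegrableOn h (Icc 0 1))
    {a b : ℝ} (ha : 0 ≤ a) (hab : a < b) (hb : b ≤ 1) :
    0 < ∫ t in Ioc a b, h t := by
  refine pos_setIntegral measurableSet_Ioc
    (hh.mono_set (Ioc_subset_Icc_self.trans (Icc_subset_Icc ha hb))) ?_ ?_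
  · simp [Real.volume_Ioc, hab, sub_pos]
  · filter_upwards [hae] with t ht hts
    exact ht ⟨ha.trans hts.1.le, hts.2.trans hb⟩

lemma cdf_one_sub {h : ℝ → ℝ} (hh : IntegrableOn h (Icc 0 1)) (h1 : cdf h 1 = 1)
    {p : ℝ} (hp0 : 0 ≤ p) (hp1 : p ≤ 1) :
    1 - cdf h p = ∫ t in Ioc p 1, h t := by
  have h2 := cdf_split hh hp0 hp1
  rw [h1] at h2; linarith

lemma cdf_lt_one {h : ℝ → ℝ} (hae : ∀ᵐ t, t ∈ Icc (0:ℝ) 1 → 0 < h t)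
    (hh : IntegrableOn h (Icc 0 1)) (h1 : cdf h 1 = 1)
    {p : ℝ} (hp0 : 0 ≤ p) (hp1 : p < 1) : cdf h p < 1 := by
  have := setInt_pos hae hh hp0 hp1 le_rfl
  have h2 := cdf_one_sub hh h1 hp0 hp1.le
  linarith

lemma cdf_le_one {h : ℝ → ℝ} (hae : ∀ᵐ t, t ∈ Icc (0:ℝ) 1 → 0 < h t)
    (hh : IntegrableOn h (Icc 0 1)) (h1 : cdf h 1 = 1)
    {p : ℝ} (hp0 : 0 ≤ p) (hp1 : p ≤ 1) : cdf h p ≤ 1 := by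
  have h2 := cdf_one_sub hh h1 hp0 hp1
  have h3 := setInt_nonneg hae (measurableSet_Ioc)
    (Ioc_subset_Icc_self.trans (Icc_subset_Icc hp0 le_rfl))
  linarith

lemma cdf_nonneg {h : ℝ → ℝ} (hae : ∀ᵐ t, t ∈ Icc (0:ℝ) 1 → 0 < h t)
    {p : ℝ} (hp1 : p ≤ 1) : 0 ≤ cdf h p := by
  rcases le_or_gt p 0 with hp | hp
  · simp [cdf, Ioc_eq_empty_of_le hp]
  · exact setInt_nonneg hae measurableSet_Ioc
      (Ioc_subset_Icc_self.trans (Icc_subset_Icc le_rfl hp1))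

-- integrability of t ↦ (c - t) * h t on subsets of [0,1]
lemma int_linear_mul {h : ℝ → ℝ} (hh : IntegrableOn h (Icc 0 1)) (c : ℝ)
    {s : Set ℝ} (hs : MeasurableSet s) (hsub : s ⊆ Icc 0 1) :
    IntegrableOn (fun t => (c - t) * h t) s := by
  refine Integrable.bdd_mul (c := |c| + 1) (hh.mono_set hsub) ?_ ?_
  · exact (continuous_const.sub continuous_id).aestronglyMeasurable
  · filter_upwards [ae_restrict_mem hs] with t ht
    have h1 := (hsub ht).1; have h2 := (hsub ht).2
    rw [Real.norm_eq_abs]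
    have := abs_sub_abs_le_abs_sub c t
    have : |c - t| ≤ |c| + |t| := abs_sub c t
    have ht1 : |t| ≤ 1 := by rw [abs_le]; constructor <;> linarith
    linarith

lemma muG_nonneg {g : ℝ → ℝ} (hg_ae : ∀ᵐ t, t ∈ Icc (0:ℝ) 1 → 0 < g t) :
    0 ≤ muG g := by
  refine setIntegral_nonneg_ae measurableSet_Ioc ?_
  filter_upwards [hg_ae] with t ht hts
  exact mul_nonneg hts.1.le (ht ⟨hts.1.le, hts.2⟩).le

lemma muG_lt_one {g : ℝ → ℝ} (hg_ae : ∀ᵐ t, t ∈ Icc (0:ℝ) 1 → 0 < g t)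
    (hg_int : IntegrableOn g (Icc 0 1)) (hg_one : cdf g 1 = 1) : muG g < 1 := by
  have hint : IntegrableOn (fun t => (1 - t) * g t) (Ioc 0 1) :=
    int_linear_mul hg_int 1 measurableSet_Ioc Ioc_subset_Icc_self
  have hpos : 0 < ∫ t in Ioc (0:ℝ) 1, (1 - t) * g t := by
    refine pos_setIntegral measurableSet_Ioc hint (by simp) ?_
    have h1 : ∀ᵐ t : ℝ, t ≠ 1 := by
      refine ae_iff.2 ?_
      simpa using Real.volume_singleton (x := 1)
    filter_upwards [hg_ae, h1] with t ht ht1 hts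
    have := ht ⟨hts.1.le, hts.2⟩
    have ht2 : t < 1 := lt_of_le_of_ne hts.2 ht1
    exact mul_pos (by linarith) this
  have hB : IntegrableOn (fun t => t * g t) (Ioc (0:ℝ) 1) := by
    refine Integrable.bdd_mul (c := 1) (f := fun t : ℝ => t)
      (hg_int.mono_set Ioc_subset_Icc_self) continuous_id.aestronglyMeasurable ?_
    filter_upwards [ae_restrict_mem measurableSet_Ioc] with t ht
    rw [Real.norm_eq_abs, abs_le]; constructor <;> [linarith [ht.1]; exact ht.2]
  have heq : ∫ t in Ioc (0:ℝ) 1, (1 - t) * g t = cdf g 1 - muG g := by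
    unfold cdf muG
    rw [← integral_sub (hg_int.mono_set Ioc_subset_Icc_self) hB]
    exact integral_congr_ae (ae_of_all _ fun t => by ring)
  rw [heq, hg_one] at hpos; linarith
lemma triangle_swap {h : ℝ → ℝ} {a b : ℝ} (hab : a ≤ b)
    (hh : IntegrableOn h (Ioc a b)) :
    ∫ y in Ioc a b, ∫ t in Ioc a y, h t = ∫ t in Ioc a b, (b - t) * h t := by
  set s : Set ℝ := Ioc a b with hs
  set μ := volume.restrict s with hμ
  set k : ℝ → ℝ → ℝ := fun y t => (Iic y).indicator h t with hk
  have hsm : MeasurableSet s := measurableSet_Ioc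
  have haesm : AEStronglyMeasurable (uncurry k) (μ.prod μ) := by
    have h1 : AEStronglyMeasurable (fun p : ℝ × ℝ => h p.2) (μ.prod μ) :=
      hh.aestronglyMeasurable.comp_snd
    have h2 : MeasurableSet {p : ℝ × ℝ | p.2 ≤ p.1} :=
      measurableSet_le measurable_snd measurable_fst
    have : uncurry k = {p : ℝ × ℝ | p.2 ≤ p.1}.indicator (fun p => h p.2) := by
      ext p
      by_cases hp : p.2 ≤ p.1 <;>
        simp [uncurry, hk, Set.indicator_apply, hp]
    rw [this]
    exact h1.indicator h2
  have hint : Integrable (uncurry k) (μ.prod μ) := by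
    rw [integrable_prod_iff' haesm]
    constructor
    · refine ae_of_all _ fun t => ?_
      have : Integrable (fun y => (Ici t).indicator (fun _ => h t) y) μ :=
        (integrable_const (h t)).indicator measurableSet_Ici
      refine this.congr (ae_of_all _ fun y => ?_)
      by_cases hy : t ≤ y <;> simp [hk, Set.indicator_apply, hy]
    · have hi : Integrable (fun t => (b - a) * ‖h t‖) μ := (hh.norm.const_mul _)
      refine Integrable.mono' hi ?_ ?_
      · exact (haesm.norm.prod_swap).integral_prod_right'
      · refine ae_of_all _ fun t => ?_
        have h1 : (0:ℝ) ≤ ∫ y, ‖uncurry k (y, t)‖ ∂μ :=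
          integral_nonneg fun y => norm_nonneg _
        rw [Real.norm_of_nonneg h1]
        have h2 : ∀ y, ‖uncurry k (y, t)‖ ≤ ‖h t‖ := by
          intro y
          simp only [uncurry, hk, Set.indicator_apply]
          by_cases hy : t ∈ Iic y <;> simp [hy, norm_nonneg]
        calc ∫ y, ‖uncurry k (y, t)‖ ∂μ ≤ ∫ _, ‖h t‖ ∂μ := by
              refine integral_mono_of_nonneg (ae_of_all _ fun y => norm_nonneg _)
                (integrable_const _) (ae_of_all _ h2)
          _ = (b - a) * ‖h t‖ := by
              rw [integral_const]
              rw [hμ, hs]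
              simp only [Measure.restrict_apply_univ, Real.volume_Ioc, smul_eq_mul]
              rw [measureReal_restrict_apply_univ, Real.volume_real_Ioc_of_le hab]
  -- main computation
  have lhs_eq : ∫ y in s, ∫ t in Ioc a y, h t = ∫ y in s, ∫ t in s, k y t := by
    refine setIntegral_congr_fun hsm fun y hy => ?_
    rw [hk]
    rw [setIntegral_indicator measurableSet_Iic, hs, Ioc_inter_Iic,
      min_eq_right hy.2]
  rw [lhs_eq]
  rw [integral_integral_swap hint]
  refine setIntegral_congr_fun hsm fun t ht => ?_
  have hset : s ∩ Ici t = Icc t b := by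
    rw [hs]; ext y
    constructor
    · rintro ⟨⟨_, hyb⟩, hty⟩; exact ⟨hty, hyb⟩
    · rintro ⟨hty, hyb⟩; exact ⟨⟨lt_of_lt_of_le ht.1 hty, hyb⟩, hty⟩
  have : ∀ y, k y t = (Ici t).indicator (fun _ => h t) y := by
    intro y
    simp only [hk, Set.indicator_apply, mem_Iic, mem_Ici]
  calc ∫ y in s, k y t = ∫ y in s, (Ici t).indicator (fun _ => h t) y := by
        simp_rw [this]
    _ = ∫ _ in s ∩ Ici t, h t := setIntegral_indicator measurableSet_Ici
    _ = (b - t) * h t := by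
        rw [hset, setIntegral_const, Real.volume_real_Icc_of_le ht.2, smul_eq_mul]

lemma calG_nonneg {g : ℝ → ℝ} (hg_ae : ∀ᵐ t, t ∈ Icc (0:ℝ) 1 → 0 < g t)
    {x : ℝ} (hx1 : x ≤ 1) : 0 ≤ calG g x := by
  rcases le_or_gt x 0 with hx | hx
  · simp [calG, Ioc_eq_empty_of_le hx]
  · refine setIntegral_nonneg measurableSet_Ioc fun y hy => ?_
    exact cdf_nonneg hg_ae (hy.2.trans hx1)

lemma calG_eq {g : ℝ → ℝ} (hg_int : IntegrableOn g (Icc 0 1))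
    {x : ℝ} (hx0 : 0 ≤ x) (hx1 : x ≤ 1) :
    calG g x = ∫ t in Ioc 0 x, (x - t) * g t :=
  triangle_swap hx0 (hg_int.mono_set (Ioc_subset_Icc_self.trans (Icc_subset_Icc le_rfl hx1)))

lemma calG_gt {g : ℝ → ℝ} (hg_ae : ∀ᵐ t, t ∈ Icc (0:ℝ) 1 → 0 < g t)
    (hg_int : IntegrableOn g (Icc 0 1)) (hg_one : cdf g 1 = 1)
    {x : ℝ} (hx : x ∈ Ioo (0:ℝ) 1) : x - muG g < calG g x := by
  have h1 : calG g x = ∫ t in Ioc 0 x, (x - t) * g t := calG_eq hg_int hx.1.le hx.2.le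
  have hgi := hg_int.mono_set (Ioc_subset_Icc_self (a := (0:ℝ)) (b := 1))
  have hm : IntegrableOn (fun t => t * g t) (Ioc (0:ℝ) 1) := by
    refine Integrable.congr
      (int_linear_mul hg_int 0 measurableSet_Ioc Ioc_subset_Icc_self).neg
      (ae_of_all _ fun t => by simp only [Pi.neg_apply]; ring)
  have h2 : x - muG g = ∫ t in Ioc (0:ℝ) 1, (x - t) * g t := by
    have : ∫ t in Ioc (0:ℝ) 1, (x - t) * g t
        = x * (∫ t in Ioc (0:ℝ) 1, g t) - ∫ t in Ioc (0:ℝ) 1, t * g t := by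
      rw [← integral_const_mul, ← integral_sub (hgi.const_mul x) hm]
      exact integral_congr_ae (ae_of_all _ fun t => by simp only [Pi.sub_apply]; ring)
    have hg1 : (∫ t in Ioc (0:ℝ) 1, g t) = 1 := hg_one
    rw [this, hg1]
    simp [muG]
  have hsplit : ∫ t in Ioc (0:ℝ) 1, (x - t) * g t
      = (∫ t in Ioc 0 x, (x - t) * g t) + ∫ t in Ioc x 1, (x - t) * g t := by
    rw [← setIntegral_union (Set.Ioc_disjoint_Ioc_of_le le_rfl) measurableSet_Ioc
      (int_linear_mul hg_int x measurableSet_Ioc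
        (Ioc_subset_Icc_self.trans (Icc_subset_Icc le_rfl hx.2.le)))
      (int_linear_mul hg_int x measurableSet_Ioc
        (Ioc_subset_Icc_self.trans (Icc_subset_Icc hx.1.le le_rfl))),
      Ioc_union_Ioc_eq_Ioc hx.1.le hx.2.le]
  have hpos : 0 < ∫ t in Ioc x 1, (t - x) * g t := by
    refine pos_setIntegral measurableSet_Ioc
      (Integrable.congr (int_linear_mul hg_int x measurableSet_Ioc
        (Ioc_subset_Icc_self.trans (Icc_subset_Icc hx.1.le le_rfl))).neg
        (ae_of_all _ fun t => by simp only [Pi.neg_apply]; ring)) (by simp [Real.volume_Ioc, hx.2]) ?_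
    filter_upwards [hg_ae] with t ht hts
    exact mul_pos (by linarith [hts.1]) (ht ⟨(hx.1.le.trans hts.1.le), hts.2⟩)
  have hneg : ∫ t in Ioc x 1, (x - t) * g t = - ∫ t in Ioc x 1, (t - x) * g t := by
    rw [← integral_neg]
    exact integral_congr_ae (ae_of_all _ fun t => by ring)
  rw [h1, h2, hsplit, hneg]
  linarith

section psiFacts
variable {f : ℝ → ℝ} (hf_int : IntegrableOn f (Icc 0 1))
  (hf_ae : ∀ᵐ t, t ∈ Icc (0:ℝ) 1 → 0 < f t)
  (hf_one : cdf f 1 = 1)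
  (hf_cont : ContinuousOn f (Icc 0 1))
  (hf_pos : ∀ t ∈ Icc (0:ℝ) 1, 0 < f t)

include hf_int hf_ae hf_one hf_pos in
lemma psi_le_self {θ : ℝ} (hθ : θ ∈ Icc (0:ℝ) 1) : psi f θ ≤ θ := by
  have h1 : cdf f θ ≤ 1 := cdf_le_one hf_ae hf_int hf_one hθ.1 hθ.2
  have h2 : 0 < f θ := hf_pos θ hθ
  unfold psi
  have : 0 ≤ (1 - cdf f θ) / f θ := div_nonneg (by linarith) h2.le
  linarith

include hf_int hf_cont hf_pos in
lemma psi_continuousOn : ContinuousOn (psi f) (Icc 0 1) := by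
  unfold psi
  exact continuousOn_id.sub ((continuousOn_const.sub (cdf_continuousOn hf_int)).div
    hf_cont fun θ hθ => (hf_pos θ hθ).ne')

include hf_int hf_cont in
lemma cdf_hasDerivAt {θ : ℝ} (hθ : θ ∈ Ioo (0:ℝ) 1) :
    HasDerivAt (cdf f) (f θ) θ := by
  have hnhds : Icc (0:ℝ) 1 ∈ nhds θ := Icc_mem_nhds hθ.1 hθ.2
  have hFTC : HasDerivAt (fun u => ∫ t in (0:ℝ)..u, f t) (f θ) θ := by
    refine intervalIntegral.integral_hasDerivAt_right ?_ ?_ ?_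
    · exact (hf_int.mono_set (by rw [uIcc_of_le hθ.1.le]; exact Icc_subset_Icc le_rfl hθ.2.le)).intervalIntegrable
    · exact AEStronglyMeasurable.stronglyMeasurableAtFilter_of_mem
        (hf_int.aestronglyMeasurable) hnhds
    · exact hf_cont.continuousAt hnhds
  refine hFTC.congr_of_eventuallyEq ?_
  filter_upwards [IsOpen.mem_nhds isOpen_Ioi hθ.1] with x (hx : (0:ℝ) < x)
  exact cdf_intervalIntegral f hx.le

include hf_int hf_ae hf_one hf_cont hf_pos in
lemma I_eq {r : ℝ} (hr : r ∈ Icc (0:ℝ) 1) (μ : ℝ) :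
    ∫ θ in r..1, (psi f θ - μ) * f θ = (1 - cdf f r) * (r - μ) := by
  have hFc : ContinuousOn (cdf f) (Icc 0 1) := cdf_continuousOn hf_int
  have hIcc : Icc r 1 ⊆ Icc (0:ℝ) 1 := Icc_subset_Icc hr.1 le_rfl
  have hcont1 : ContinuousOn (fun θ => cdf f θ + θ * f θ) (Icc r 1) :=
    ((hFc.mono hIcc).add ((continuousOn_id.mono hIcc).mul (hf_cont.mono hIcc)))
  have huicc : uIcc r (1:ℝ) = Icc r 1 := uIcc_of_le hr.2
  have ibp : ∫ θ in r..1, (cdf f θ + θ * f θ) = 1 * cdf f 1 - r * cdf f r := by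
    refine intervalIntegral.integral_eq_sub_of_hasDeriv_right_of_le
      (f := fun θ => θ * cdf f θ) hr.2 ?_ ?_ ?_
    · exact (continuousOn_id.mono hIcc).mul (hFc.mono hIcc)
    · intro x hx
      have hx01 : x ∈ Ioo (0:ℝ) 1 := ⟨lt_of_le_of_lt hr.1 hx.1, hx.2⟩
      have hd : HasDerivAt (fun θ => θ * cdf f θ) (1 * cdf f x + x * f x) x :=
        (hasDerivAt_id' x).mul (cdf_hasDerivAt hf_int hf_cont hx01)
      have : HasDerivAt (fun θ => θ * cdf f θ) (cdf f x + x * f x) x := by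
        convert hd using 1
        ring
      exact this.hasDerivWithinAt
    · exact (huicc.symm ▸ hcont1 :
        ContinuousOn (fun θ => cdf f θ + θ * f θ) (uIcc r 1)).intervalIntegrable
  have hfiv : IntervalIntegrable f volume r 1 :=
    (hf_int.mono_set (by rw [uIcc_of_le hr.2]; exact hIcc)).intervalIntegrable
  have hfr : ∫ θ in r..1, f θ = 1 - cdf f r := by
    rw [intervalIntegral.integral_of_le hr.2, ← cdf_one_sub hf_int hf_one hr.1 hr.2]
  have hcongr : ∫ θ in r..1, (psi f θ - μ) * f θ
      = ∫ θ in r..1, ((cdf f θ + θ * f θ) - 1 - μ * f θ) := by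
    refine intervalIntegral.integral_congr fun θ hθ => ?_
    rw [uIcc_of_le hr.2] at hθ
    have hfθ : f θ ≠ 0 := (hf_pos θ (hIcc hθ)).ne'
    unfold psi
    field_simp
    ring
  rw [hcongr]
  have int1 : IntervalIntegrable (fun θ => cdf f θ + θ * f θ) volume r 1 :=
    (huicc.symm ▸ hcont1 :
      ContinuousOn (fun θ => cdf f θ + θ * f θ) (uIcc r 1)).intervalIntegrable
  have int2 : IntervalIntegrable (fun _ : ℝ => (1:ℝ)) volume r 1 := intervalIntegrable_const
  have int3 : IntervalIntegrable (fun θ => μ * f θ) volume r 1 := hfiv.const_mul μ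
  rw [intervalIntegral.integral_sub (int1.sub int2) int3,
    intervalIntegral.integral_sub int1 int2]
  rw [ibp, intervalIntegral.integral_const, intervalIntegral.integral_const_mul, hfr, hf_one]
  simp only [smul_eq_mul, one_mul, mul_one]
  ring

end psiFacts

/-- with `A = ∫_{θ*}^1 𝒢(ψ(θ)) f(θ) dθ` and `B` the maximal ex-ante
fixed-price profit, `0 < B < A`, `δ* = B/A ∈ (0,1)`, and `δ·A ≷ B` according as `δ ≷ δ*`. -/
theorem stmt9
    (f g : ℝ → ℝ)
    (hf_int : IntegrableOn f (Set.Icc 0 1))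
    (hg_int : IntegrableOn g (Set.Icc 0 1))
    (hf_ae : ∀ᵐ t, t ∈ Set.Icc (0:ℝ) 1 → 0 < f t)
    (hg_ae : ∀ᵐ t, t ∈ Set.Icc (0:ℝ) 1 → 0 < g t)
    (hf_one : cdf f 1 = 1)
    (hg_one : cdf g 1 = 1)
    (hf_cont : ContinuousOn f (Set.Icc 0 1))
    (hf_pos : ∀ t ∈ Set.Icc (0:ℝ) 1, 0 < f t)
    (hpsi_mono : StrictMonoOn (psi f) (Set.Icc 0 1))
    (θs : ℝ) (hθs : θs ∈ Set.Ioo (0:ℝ) 1) (hθs0 : psi f θs = 0)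
    (B : ℝ)
    (hB : IsGreatest ((fun p => (1 - cdf f p) * (p - muG g)) '' Set.Icc (0:ℝ) 1) B) :
    0 < B ∧ B < (∫ θ in θs..1, calG g (psi f θ) * f θ) ∧
    B / (∫ θ in θs..1, calG g (psi f θ) * f θ) ∈ Set.Ioo (0:ℝ) 1 ∧
    (∀ δ ∈ Set.Ioo (B / (∫ θ in θs..1, calG g (psi f θ) * f θ)) 1,
      B < δ * (∫ θ in θs..1, calG g (psi f θ) * f θ)) ∧
    (∀ δ ∈ Set.Ioo (0:ℝ) (B / (∫ θ in θs..1, calG g (psi f θ) * f θ)),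
      δ * (∫ θ in θs..1, calG g (psi f θ) * f θ) < B) := by
  have hμ0 : 0 ≤ muG g := muG_nonneg hg_ae
  have hμ1 : muG g < 1 := muG_lt_one hg_ae hg_int hg_one
  -- B > 0
  have hp0mem : (1 + muG g)/2 ∈ Icc (0:ℝ) 1 := ⟨by linarith, by linarith⟩
  have hval : (1 - cdf f ((1 + muG g)/2)) * ((1 + muG g)/2 - muG g) ≤ B :=
    hB.2 ⟨_, hp0mem, rfl⟩
  have hcdf_lt : cdf f ((1 + muG g)/2) < 1 :=
    cdf_lt_one hf_ae hf_int hf_one (by linarith) (by linarith)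
  have hBpos : 0 < B := lt_of_lt_of_le (mul_pos (by linarith) (by linarith)) hval
  -- the maximizer
  obtain ⟨p, hp, hpv0⟩ := hB.1
  have hpv : (1 - cdf f p) * (p - muG g) = B := hpv0
  have hp1 : p < 1 := by
    rcases lt_or_eq_of_le hp.2 with h | h
    · exact h
    · exfalso
      rw [h, hf_one] at hpv
      simp at hpv
      linarith [hpv ▸ hBpos]
  set q := max p θs with hqdef
  have hq0 : 0 ≤ q := le_trans hp.1 (le_max_left _ _)
  have hqθs : θs ≤ q := le_max_right _ _
  have hq1 : q < 1 := max_lt hp1 hθs.2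
  have hqIcc : q ∈ Icc (0:ℝ) 1 := ⟨hq0, hq1.le⟩
  have hθsIcc : θs ∈ Icc (0:ℝ) 1 := ⟨hθs.1.le, hθs.2.le⟩
  -- psi facts
  have hψcont : ContinuousOn (psi f) (Icc 0 1) := psi_continuousOn hf_int hf_cont hf_pos
  have hψmem : ∀ θ ∈ Icc θs 1, psi f θ ∈ Icc (0:ℝ) 1 := by
    intro θ hθ
    have hθ01 : θ ∈ Icc (0:ℝ) 1 := ⟨hθs.1.le.trans hθ.1, hθ.2⟩
    constructor
    · rw [← hθs0]
      exact hpsi_mono.monotoneOn hθsIcc hθ01 hθ.1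
    · exact (psi_le_self hf_int hf_ae hf_one hf_pos hθ01).trans hθ.2
  -- continuity of integrands
  have hGcont : ContinuousOn (calG g) (Icc 0 1) := by
    have h1 : ContinuousOn (cdf g) (Icc 0 1) := cdf_continuousOn hg_int
    have h2 : IntegrableOn (cdf g) (Icc 0 1) := h1.integrableOn_compact isCompact_Icc
    exact intervalIntegral.continuousOn_primitive h2
  have hsubθs : Icc θs (1:ℝ) ⊆ Icc 0 1 := Icc_subset_Icc hθs.1.le le_rfl
  have hic : ContinuousOn (fun θ => calG g (psi f θ) * f θ) (Icc θs 1) := by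
    refine ContinuousOn.mul ?_ (hf_cont.mono hsubθs)
    exact hGcont.comp (hψcont.mono hsubθs) hψmem
  have hic2 : ContinuousOn (fun θ => (psi f θ - muG g) * f θ) (Icc 0 1) :=
    (hψcont.sub continuousOn_const).mul hf_cont
  -- interval integrability helpers
  have hii : ∀ a b : ℝ, θs ≤ a → a ≤ b → b ≤ 1 →
      IntervalIntegrable (fun θ => calG g (psi f θ) * f θ) volume a b := by
    intro a b ha hab hb
    refine ContinuousOn.intervalIntegrable ?_
    rw [uIcc_of_le hab]
    exact hic.mono (Icc_subset_Icc ha hb)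
  have hii2 : ∀ a b : ℝ, 0 ≤ a → a ≤ b → b ≤ 1 →
      IntervalIntegrable (fun θ => (psi f θ - muG g) * f θ) volume a b := by
    intro a b ha hab hb
    refine ContinuousOn.intervalIntegrable ?_
    rw [uIcc_of_le hab]
    exact hic2.mono (Icc_subset_Icc ha hb)
  -- step 1 : B ≤ I(q)
  have hIq : B ≤ ∫ θ in q..1, (psi f θ - muG g) * f θ := by
    rcases le_total θs p with hc | hc
    · have hqp : q = p := max_eq_left hc
      rw [hqp, I_eq hf_int hf_ae hf_one hf_cont hf_pos hp (muG g), hpv]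
    · have hqθ : q = θs := max_eq_right hc
      have hsplit : (∫ θ in p..θs, (psi f θ - muG g) * f θ)
          + ∫ θ in θs..1, (psi f θ - muG g) * f θ
          = ∫ θ in p..1, (psi f θ - muG g) * f θ :=
        intervalIntegral.integral_add_adjacent_intervals
          (hii2 p θs hp.1 hc hθs.2.le) (hii2 θs 1 hθs.1.le hθs.2.le le_rfl)
      have hfirst : (∫ θ in p..θs, (psi f θ - muG g) * f θ) ≤ 0 := by
        have h0 : 0 ≤ ∫ θ in p..θs, -((psi f θ - muG g) * f θ) := by
          refine intervalIntegral.integral_nonneg hc fun u hu => ?_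
          have hu01 : u ∈ Icc (0:ℝ) 1 := ⟨hp.1.trans hu.1, hu.2.trans hθs.2.le⟩
          have hψu : psi f u ≤ 0 := by
            rw [← hθs0]
            exact hpsi_mono.monotoneOn hu01 hθsIcc hu.2
          have := hf_pos u hu01
          nlinarith
        rw [intervalIntegral.integral_neg] at h0
        linarith
      have hval2 : ∫ θ in p..1, (psi f θ - muG g) * f θ = B := by
        rw [I_eq hf_int hf_ae hf_one hf_cont hf_pos hp (muG g), hpv]
      rw [hqθ]
      linarith
  -- step 2 : I(q) < ∫ q..1 calG
  have hstrict : (∫ θ in q..1, (psi f θ - muG g) * f θ)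
      < ∫ θ in q..1, calG g (psi f θ) * f θ := by
    rw [← sub_pos, ← intervalIntegral.integral_sub (hii q 1 hqθs hq1.le le_rfl)
      (hii2 q 1 hq0 hq1.le le_rfl)]
    refine intervalIntegral.intervalIntegral_pos_of_pos_on
      ((hii q 1 hqθs hq1.le le_rfl).sub (hii2 q 1 hq0 hq1.le le_rfl)) ?_ hq1
    intro x hx
    have hx01 : x ∈ Icc (0:ℝ) 1 := ⟨hq0.trans hx.1.le, hx.2.le⟩
    have hψx : psi f x ∈ Ioo (0:ℝ) 1 := by
      constructor
      · rw [← hθs0]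
        exact hpsi_mono hθsIcc hx01 (lt_of_le_of_lt hqθs hx.1)
      · exact lt_of_le_of_lt (psi_le_self hf_int hf_ae hf_one hf_pos hx01) hx.2
    have hkey := calG_gt hg_ae hg_int hg_one hψx
    have hfx := hf_pos x hx01
    nlinarith
  -- step 3 : ∫ q..1 calG ≤ A
  have hsplitA : (∫ θ in θs..q, calG g (psi f θ) * f θ)
      + ∫ θ in q..1, calG g (psi f θ) * f θ
      = ∫ θ in θs..1, calG g (psi f θ) * f θ :=
    intervalIntegral.integral_add_adjacent_intervals
      (hii θs q le_rfl hqθs hq1.le) (hii q 1 hqθs hq1.le le_rfl)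
  have hfirstA : 0 ≤ ∫ θ in θs..q, calG g (psi f θ) * f θ := by
    refine intervalIntegral.integral_nonneg hqθs fun u hu => ?_
    have hu01 : u ∈ Icc θs (1:ℝ) := ⟨hu.1, hu.2.trans hq1.le⟩
    exact mul_nonneg (calG_nonneg hg_ae (hψmem u hu01).2)
      (hf_pos u (hsubθs hu01)).le
  have hBA : B < ∫ θ in θs..1, calG g (psi f θ) * f θ := by linarith
  have hApos : 0 < ∫ θ in θs..1, calG g (psi f θ) * f θ := lt_trans hBpos hBA
  refine ⟨hBpos, hBA, ⟨div_pos hBpos hApos, (div_lt_one hApos).2 hBA⟩, ?_, ?_⟩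
  · intro δ hδ
    exact (div_lt_iff₀ hApos).1 hδ.1
  · intro δ hδ
    exact (lt_div_iff₀ hApos).1 hδ.2
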